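/- Let (e_n)_{n≥1} be an orthonormal basis of H and f_n = e_1 + e_n for n ≥ 2. Then (f_n)_{n≥2} is not a weighted frame: there are no positive weights (ω_n)_{n≥2} such that (ω_n f_n)_{n≥2} is a frame for H. -/

import Mathlib

open scoped ENNReal NNReal

/-- The Bessel-type sum `∑ₙ |⟨f, gₙ⟩|²` valued in `ℝ≥0∞`. -/
noncomputable def bSum {H : Type*} [NormedAddCommGroup H] [InnerProductSpace ℂ H]
    (g : ℕ → H) (f : H) : ℝ≥0∞ :=
  ∑' n, ((‖(inner ℂ f (g n) : ℂ)‖₊ : ℝ≥0∞)) ^ 2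

/-- with the orthonormal basis reindexed over ℕ, `f n = e 0 + e (n+1)`
plays the role of `f_n = e_1 + e_n`, `n ≥ 2`. -/
theorem stmt10 {H : Type*} [NormedAddCommGroup H] [InnerProductSpace ℂ H] [CompleteSpace H]
    [TopologicalSpace.SeparableSpace H]
    (e : ℕ → H) (he : Orthonormal ℂ e)
    (hecomplete : (Submodule.span ℂ (Set.range e)).topologicalClosure = ⊤)
    (f : ℕ → H) (hf : ∀ n, f n = e 0 + e (n + 1)) :
    ¬ ∃ ω : ℕ → ℝ, (∀ n, 0 < ω n) ∧ ∃ A B : ℝ, 0 < A ∧ 0 < B ∧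
      ∀ x : H, ENNReal.ofReal A * (‖x‖₊ : ℝ≥0∞) ^ 2
          ≤ bSum (fun n => ((ω n : ℝ) : ℂ) • f n) x ∧
        bSum (fun n => ((ω n : ℝ) : ℂ) • f n) x ≤ ENNReal.ofReal B * (‖x‖₊ : ℝ≥0∞) ^ 2 := by
  rintro ⟨ω, hω, A, B, hA, hB, hframe⟩
  have hite : ∀ i j, (inner ℂ (e i) (e j) : ℂ) = if i = j then 1 else 0 :=
    orthonormal_iff_ite.mp he
  have hnorm : ∀ i, (‖e i‖₊ : ℝ≥0∞) = 1 := by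
    intro i
    have h1 : ‖e i‖₊ = 1 := NNReal.coe_injective (by simpa using he.1 i)
    rw [h1]; simp
  -- bSum at e (k+1) equals ‖ω k‖₊ ^ 2
  have hb1 : ∀ k, bSum (fun n => ((ω n : ℝ) : ℂ) • f n) (e (k + 1))
      = (‖ω k‖₊ : ℝ≥0∞) ^ 2 := by
    intro k
    unfold bSum
    have hterm : ∀ n, ((‖(inner ℂ (e (k + 1)) (((ω n : ℝ) : ℂ) • f n) : ℂ)‖₊ : ℝ≥0∞)) ^ 2
        = if n = k then (‖ω k‖₊ : ℝ≥0∞) ^ 2 else 0 := by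
      intro n
      rw [hf, inner_smul_right, inner_add_right, hite, hite]
      by_cases h : n = k
      · subst h; simp
      · have h1 : k + 1 ≠ 0 := Nat.succ_ne_zero k
        have h2 : k + 1 ≠ n + 1 := by omega
        simp [h1, h2, h, Ne.symm h]
    calc ∑' n, ((‖(inner ℂ (e (k + 1)) (((ω n : ℝ) : ℂ) • f n) : ℂ)‖₊ : ℝ≥0∞)) ^ 2
        = ∑' n, (if n = k then (‖ω k‖₊ : ℝ≥0∞) ^ 2 else 0) := tsum_congr hterm
      _ = (‖ω k‖₊ : ℝ≥0∞) ^ 2 := tsum_ite_eq k _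
  -- bSum at e 0 equals ∑' n, ‖ω n‖₊ ^ 2
  have hb0 : bSum (fun n => ((ω n : ℝ) : ℂ) • f n) (e 0)
      = ∑' n, (‖ω n‖₊ : ℝ≥0∞) ^ 2 := by
    unfold bSum
    refine tsum_congr fun n => ?_
    have h2 : (0 : ℕ) ≠ n + 1 := (Nat.succ_ne_zero n).symm
    simp only [hf, inner_smul_right, inner_add_right, hite]
    simp [h2]
  -- lower bound gives A ≤ ‖ω k‖² for every k
  have hlow : ∀ k, ENNReal.ofReal A ≤ (‖ω k‖₊ : ℝ≥0∞) ^ 2 := by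
    intro k
    have := (hframe (e (k + 1))).1
    rwa [hb1, hnorm, one_pow, mul_one] at this
  -- hence the sum is infinite
  have htop : (∑' n, (‖ω n‖₊ : ℝ≥0∞) ^ 2) = ⊤ := by
    have : (⊤ : ℝ≥0∞) = ∑' _ : ℕ, ENNReal.ofReal A :=
      (ENNReal.tsum_const_eq_top_of_ne_zero (ENNReal.ofReal_pos.mpr hA).ne').symm
    refine top_le_iff.mp (this ▸ ENNReal.tsum_le_tsum hlow)
  have hup := (hframe (e 0)).2
  rw [hb0, hnorm, one_pow, mul_one, htop] at hup
  exact (ENNReal.ofReal_lt_top).not_ge (top_le_iff.mpr (top_le_iff.mp hup))
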